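/- If I(Δ; Q) = 0, H(S' | S, Q) = 0, and I(Δ, Q; S) = 0, then I(Δ; S' | S) = 0. (Lemma 2: securely coded updates preserve conditional independence of the increment from updated storage.) -/

import Mathlib

open scoped BigOperators

/-- `p` is a probability mass function on the finite sample space `Ω`. -/
def IsPMF {Ω : Type} [Fintype Ω] (p : Ω → ℝ) : Prop :=
  (∀ ω, 0 ≤ p ω) ∧ ∑ ω : Ω, p ω = 1

open Classical in
/-- Probability of the event `E` under the pmf `p`. -/
noncomputable def probEvent {Ω : Type} [Fintype Ω] (p : Ω → ℝ) (E : Ω → Prop) : ℝ :=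
  ∑ ω : Ω, if E ω then p ω else 0

/-- Shannon entropy (base `b`) of the random variable `X` under the pmf `p`. -/
noncomputable def entH {Ω α : Type} [Fintype Ω] [Fintype α]
    (b : ℝ) (p : Ω → ℝ) (X : Ω → α) : ℝ :=
  -∑ x : α, probEvent p (fun ω => X ω = x) * Real.logb b (probEvent p (fun ω => X ω = x))

/-- Conditional entropy `H(X | Y) = H(X,Y) - H(Y)`. -/
noncomputable def condH {Ω α β : Type} [Fintype Ω] [Fintype α] [Fintype β]
    (b : ℝ) (p : Ω → ℝ) (X : Ω → α) (Y : Ω → β) : ℝ :=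
  entH b p (fun ω => (X ω, Y ω)) - entH b p Y

/-- Mutual information `I(X;Y) = H(X) + H(Y) - H(X,Y)`. -/
noncomputable def mutI {Ω α β : Type} [Fintype Ω] [Fintype α] [Fintype β]
    (b : ℝ) (p : Ω → ℝ) (X : Ω → α) (Y : Ω → β) : ℝ :=
  entH b p X + entH b p Y - entH b p (fun ω => (X ω, Y ω))

/-- Conditional mutual information `I(X;Y | Z) = H(X|Z) - H(X|Y,Z)`. -/
noncomputable def condMI {Ω α β δ : Type} [Fintype Ω] [Fintype α] [Fintype β] [Fintype δ]
    (b : ℝ) (p : Ω → ℝ) (X : Ω → α) (Y : Ω → β) (Z : Ω → δ) : ℝ :=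
  condH b p X Z - condH b p X (fun ω => (Y ω, Z ω))

/-- `X` and `Y` are independent random variables under `p`. -/
def IndepRV {Ω α β : Type} [Fintype Ω] [Fintype α] [Fintype β]
    (p : Ω → ℝ) (X : Ω → α) (Y : Ω → β) : Prop :=
  ∀ x y, probEvent p (fun ω => X ω = x ∧ Y ω = y)
    = probEvent p (fun ω => X ω = x) * probEvent p (fun ω => Y ω = y)

/-- `X` is uniformly distributed under `p`. -/
def IsUniform {Ω α : Type} [Fintype Ω] [Fintype α] (p : Ω → ℝ) (X : Ω → α) : Prop :=
  ∀ x, probEvent p (fun ω => X ω = x) = ((Fintype.card α : ℝ))⁻¹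

section Helpers

variable {Ω : Type} [Fintype Ω] (p : Ω → ℝ)

lemma probEvent_nonneg (hp : ∀ ω, 0 ≤ p ω) (E : Ω → Prop) : 0 ≤ probEvent p E := by
  classical
  unfold probEvent
  apply Finset.sum_nonneg
  intro ω _
  split <;> simp [hp ω]

lemma probEvent_congr {E F : Ω → Prop} (h : ∀ ω, E ω ↔ F ω) :
    probEvent p E = probEvent p F := by
  classical
  unfold probEvent
  apply Finset.sum_congr rfl
  intro ω _
  simp [h ω]

lemma probEvent_marg {β : Type} [Fintype β] (E : Ω → Prop) (Y : Ω → β) :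
    probEvent p E = ∑ y : β, probEvent p (fun ω => E ω ∧ Y ω = y) := by
  classical
  unfold probEvent
  rw [Finset.sum_comm]
  apply Finset.sum_congr rfl
  intro ω _
  by_cases h : E ω <;> simp [h]

lemma sum_probEvent_eq_one {β : Type} [Fintype β] (hp : IsPMF p) (Y : Ω → β) :
    ∑ y : β, probEvent p (fun ω => Y ω = y) = 1 := by
  classical
  unfold probEvent
  rw [Finset.sum_comm]
  rw [← hp.2]
  apply Finset.sum_congr rfl
  intro ω _
  simp

lemma entH_comp {α α' : Type} [Fintype α] [Fintype α'] (b : ℝ) (X : Ω → α)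
    (e : α → α') (he : Function.Injective e) :
    entH b p (fun ω => e (X ω)) = entH b p X := by
  classical
  unfold entH
  rw [← Finset.sum_subset (Finset.subset_univ (Finset.univ.image e))]
  · rw [Finset.sum_image (fun x _ y _ h => he h)]
    congr 1
    apply Finset.sum_congr rfl
    intro x _
    rw [probEvent_congr p (E := fun ω => e (X ω) = e x) (F := fun ω => X ω = x)
      (fun ω => he.eq_iff)]
  · intro x' _ hx'
    have h0 : probEvent p (fun ω => e (X ω) = x') = 0 := by
      unfold probEvent
      apply Finset.sum_eq_zero
      intro ω _
      rw [if_neg]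
      intro h
      exact hx' (Finset.mem_image.mpr ⟨X ω, Finset.mem_univ _, h⟩)
    simp [h0]

end Helpers

section Main

variable {Ω α β δ : Type} [Fintype Ω] [Fintype α] [Fintype β] [Fintype δ]

lemma condMI_nonneg (b : ℝ) (hb : 1 < b) (p : Ω → ℝ) (hp : IsPMF p)
    (X : Ω → α) (Y : Ω → β) (Z : Ω → δ) : 0 ≤ condMI b p X Y Z := by
  classical
  have hlb : 0 < Real.log b := Real.log_pos hb
  set P : α → β → δ → ℝ := fun x y z => probEvent p (fun ω => X ω = x ∧ Y ω = y ∧ Z ω = z)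
    with hPdef
  have hPnn : ∀ x y z, 0 ≤ P x y z := fun x y z => probEvent_nonneg p hp.1 _
  set Pxz : α → δ → ℝ := fun x z => ∑ y, P x y z with hPxzdef
  set Pyz : β → δ → ℝ := fun y z => ∑ x, P x y z with hPyzdef
  set Pz : δ → ℝ := fun z => ∑ x, ∑ y, P x y z with hPzdef
  have hPxznn : ∀ x z, 0 ≤ Pxz x z := fun x z =>
    Finset.sum_nonneg fun y _ => hPnn x y z
  have hPyznn : ∀ y z, 0 ≤ Pyz y z := fun y z =>
    Finset.sum_nonneg fun x _ => hPnn x y z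
  have hPznn : ∀ z, 0 ≤ Pz z := fun z =>
    Finset.sum_nonneg fun x _ => Finset.sum_nonneg fun y _ => hPnn x y z
  -- identification of marginals with probEvent
  have hXZ : ∀ x z, probEvent p (fun ω => (X ω, Z ω) = (x, z)) = Pxz x z := by
    intro x z
    rw [probEvent_congr p (F := fun ω => X ω = x ∧ Z ω = z) (fun ω => by simp [Prod.ext_iff]),
      probEvent_marg p _ Y]
    exact Finset.sum_congr rfl fun y _ => probEvent_congr p (fun ω => by tauto)
  have hYZ : ∀ y z, probEvent p (fun ω => (Y ω, Z ω) = (y, z)) = Pyz y z := by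
    intro y z
    rw [probEvent_congr p (F := fun ω => Y ω = y ∧ Z ω = z) (fun ω => by simp [Prod.ext_iff]),
      probEvent_marg p _ X]
    exact Finset.sum_congr rfl fun x _ => probEvent_congr p (fun ω => by tauto)
  have hZm : ∀ z, probEvent p (fun ω => Z ω = z) = Pz z := by
    intro z
    rw [probEvent_marg p _ X]
    apply Finset.sum_congr rfl
    intro x _
    rw [probEvent_marg p _ Y]
    exact Finset.sum_congr rfl fun y _ => probEvent_congr p (fun ω => by tauto)
  have hXYZ : ∀ x y z, probEvent p (fun ω => (X ω, (Y ω, Z ω)) = (x, (y, z))) = P x y z := by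
    intro x y z
    exact probEvent_congr p (fun ω => by simp [Prod.ext_iff])
  -- entropy expansions as triple sums over (x, y, z)
  have eXYZ : entH b p (fun ω => (X ω, (Y ω, Z ω)))
      = -∑ x, ∑ y, ∑ z, P x y z * Real.logb b (P x y z) := by
    unfold entH
    rw [Fintype.sum_prod_type]
    congr 1
    apply Finset.sum_congr rfl; intro x _
    rw [Fintype.sum_prod_type]
    apply Finset.sum_congr rfl; intro y _
    apply Finset.sum_congr rfl; intro z _
    rw [hXYZ]
  have eXZ : entH b p (fun ω => (X ω, Z ω))
      = -∑ x, ∑ y, ∑ z, P x y z * Real.logb b (Pxz x z) := by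
    unfold entH
    rw [Fintype.sum_prod_type]
    congr 1
    apply Finset.sum_congr rfl; intro x _
    rw [← Finset.sum_comm]
    apply Finset.sum_congr rfl; intro z _
    rw [hXZ, hPxzdef]
    exact Finset.sum_mul _ _ _
  have eYZ : entH b p (fun ω => (Y ω, Z ω))
      = -∑ x, ∑ y, ∑ z, P x y z * Real.logb b (Pyz y z) := by
    unfold entH
    rw [Fintype.sum_prod_type]
    have h1 : ∀ y, (∑ z, probEvent p (fun ω => (Y ω, Z ω) = (y, z)) *
        Real.logb b (probEvent p (fun ω => (Y ω, Z ω) = (y, z))))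
        = ∑ x, ∑ z, P x y z * Real.logb b (Pyz y z) := by
      intro y
      rw [← Finset.sum_comm]
      apply Finset.sum_congr rfl; intro z _
      rw [hYZ, hPyzdef]
      exact Finset.sum_mul _ _ _
    simp_rw [h1]
    congr 1
    exact Finset.sum_comm
  have eZ : entH b p Z = -∑ x, ∑ y, ∑ z, P x y z * Real.logb b (Pz z) := by
    unfold entH
    have h1 : ∀ z, probEvent p (fun ω => Z ω = z) *
        Real.logb b (probEvent p (fun ω => Z ω = z))
        = ∑ x, ∑ y, P x y z * Real.logb b (Pz z) := by
      intro z
      rw [hZm, hPzdef]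
      rw [Finset.sum_mul]
      exact Finset.sum_congr rfl fun x _ => Finset.sum_mul _ _ _
    simp_rw [h1]
    congr 1
    rw [Finset.sum_comm]
    exact Finset.sum_congr rfl fun x _ => Finset.sum_comm
  -- the main identity
  have main_eq : condMI b p X Y Z = ∑ x, ∑ y, ∑ z, P x y z *
      (Real.logb b (P x y z) + Real.logb b (Pz z)
        - Real.logb b (Pxz x z) - Real.logb b (Pyz y z)) := by
    unfold condMI condH
    rw [eXYZ, eXZ, eYZ, eZ]
    simp only [mul_add, mul_sub, Finset.sum_add_distrib, Finset.sum_sub_distrib]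
    ring
  rw [main_eq]
  -- termwise lower bound
  set s : α → β → δ → ℝ := fun x y z =>
    if Pz z = 0 then 0 else Pxz x z * Pyz y z / Pz z with hsdef
  have hsnn : ∀ x y z, 0 ≤ s x y z := by
    intro x y z
    rw [hsdef]
    dsimp only
    split
    · exact le_refl 0
    · exact div_nonneg (mul_nonneg (hPxznn x z) (hPyznn y z)) (hPznn z)
  have key : ∀ x y z, (P x y z - s x y z) / Real.log b
      ≤ P x y z * (Real.logb b (P x y z) + Real.logb b (Pz z)
        - Real.logb b (Pxz x z) - Real.logb b (Pyz y z)) := by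
    intro x y z
    by_cases hP0 : P x y z = 0
    · rw [hP0]
      simp only [zero_mul, zero_sub]
      apply div_nonpos_of_nonpos_of_nonneg _ (le_of_lt hlb)
      simpa using hsnn x y z
    · have hPpos : 0 < P x y z := lt_of_le_of_ne (hPnn x y z) (Ne.symm hP0)
      have hPxzpos : 0 < Pxz x z :=
        lt_of_lt_of_le hPpos (Finset.single_le_sum (fun y' _ => hPnn x y' z) (Finset.mem_univ y))
      have hPyzpos : 0 < Pyz y z :=
        lt_of_lt_of_le hPpos (Finset.single_le_sum (fun x' _ => hPnn x' y z) (Finset.mem_univ x))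
      have hPzpos : 0 < Pz z := lt_of_lt_of_le hPxzpos
        (Finset.single_le_sum (fun x' (_ : x' ∈ Finset.univ) => hPxznn x' z) (Finset.mem_univ x))
      have hs : s x y z = Pxz x z * Pyz y z / Pz z := by
        rw [hsdef]; dsimp only; rw [if_neg (ne_of_gt hPzpos)]
      set t : ℝ := (Pxz x z * Pyz y z) / (P x y z * Pz z) with htdef
      have htpos : 0 < t := by positivity
      have hlog : Real.log t ≤ t - 1 := Real.log_le_sub_one_of_pos htpos
      have hlogt : Real.log t = Real.log (Pxz x z) + Real.log (Pyz y z)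
          - Real.log (P x y z) - Real.log (Pz z) := by
        rw [htdef, Real.log_div (by positivity) (by positivity),
          Real.log_mul (ne_of_gt hPxzpos) (ne_of_gt hPyzpos),
          Real.log_mul (ne_of_gt hPpos) (ne_of_gt hPzpos)]
        ring
      have hPt : P x y z * t = s x y z := by
        rw [htdef, hs]
        field_simp
      have h1 : P x y z * (1 - t) ≤ P x y z * (- Real.log t) := by
        apply mul_le_mul_of_nonneg_left _ (le_of_lt hPpos)
        linarith
      have h2 : P x y z - s x y z ≤ P x y z *
          (Real.log (P x y z) + Real.log (Pz z)
            - Real.log (Pxz x z) - Real.log (Pyz y z)) := by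
        rw [hlogt] at h1
        rw [← hPt]
        nlinarith [h1]
      rw [div_le_iff₀ hlb]
      have hconv : P x y z * (Real.logb b (P x y z) + Real.logb b (Pz z)
            - Real.logb b (Pxz x z) - Real.logb b (Pyz y z)) * Real.log b
          = P x y z * (Real.log (P x y z) + Real.log (Pz z)
            - Real.log (Pxz x z) - Real.log (Pyz y z)) := by
        simp only [Real.logb]
        field_simp
      rw [hconv]
      exact h2
  -- summing the bound
  have sum_s : ∑ x, ∑ y, ∑ z, s x y z = 1 := by
    have hz : ∀ z, ∑ x, ∑ y, s x y z = Pz z := by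
      intro z
      by_cases h0 : Pz z = 0
      · have : ∀ x y, s x y z = 0 := by
          intro x y; rw [hsdef]; dsimp only; rw [if_pos h0]
        simp [this, h0]
      · have hs' : ∀ x y, s x y z = Pxz x z * Pyz y z / Pz z := by
          intro x y; rw [hsdef]; dsimp only; rw [if_neg h0]
        simp only [hs']
        have hyz : ∑ y, Pyz y z = Pz z := by
          show (∑ y, ∑ x, P x y z) = ∑ x, ∑ y, P x y z
          exact Finset.sum_comm
        have : ∑ x, ∑ y, Pxz x z * Pyz y z / Pz z
            = (∑ x, Pxz x z) * (∑ y, Pyz y z) / Pz z := by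
          rw [Finset.sum_mul, Finset.sum_div]
          apply Finset.sum_congr rfl; intro x _
          rw [Finset.mul_sum, Finset.sum_div]
        rw [this, hyz]
        rw [show (∑ x, Pxz x z) = Pz z from rfl]
        field_simp
      -- done per z
    calc ∑ x, ∑ y, ∑ z, s x y z
        = ∑ x, ∑ z, ∑ y, s x y z := Finset.sum_congr rfl fun x _ => Finset.sum_comm
      _ = ∑ z, ∑ x, ∑ y, s x y z := Finset.sum_comm
      _ = ∑ z, Pz z := Finset.sum_congr rfl fun z _ => hz z
      _ = 1 := by
          rw [← sum_probEvent_eq_one p hp Z]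
          exact Finset.sum_congr rfl fun z _ => (hZm z).symm
  have sum_P : ∑ x, ∑ y, ∑ z, P x y z = 1 := by
    calc ∑ x, ∑ y, ∑ z, P x y z
        = ∑ x, ∑ z, ∑ y, P x y z := Finset.sum_congr rfl fun x _ => Finset.sum_comm
      _ = ∑ z, ∑ x, ∑ y, P x y z := Finset.sum_comm
      _ = ∑ z, Pz z := rfl
      _ = 1 := by
          rw [← sum_probEvent_eq_one p hp Z]
          exact Finset.sum_congr rfl fun z _ => (hZm z).symm
  have hlow : ∑ x, ∑ y, ∑ z, (P x y z - s x y z) / Real.log b = 0 := by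
    simp only [sub_div, Finset.sum_sub_distrib, ← Finset.sum_div, sum_P, sum_s, sub_self]
  rw [← hlow]
  apply Finset.sum_le_sum; intro x _
  apply Finset.sum_le_sum; intro y _
  apply Finset.sum_le_sum; intro z _
  exact key x y z

end Main

section More

variable {Ω α β : Type} [Fintype Ω] [Fintype α] [Fintype β]

lemma condH_nonneg (b : ℝ) (hb : 1 < b) (p : Ω → ℝ) (hp : IsPMF p)
    (X : Ω → α) (Y : Ω → β) : 0 ≤ condH b p X Y := by
  classical
  set P : α → β → ℝ := fun x y => probEvent p (fun ω => X ω = x ∧ Y ω = y) with hPdef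
  have hPnn : ∀ x y, 0 ≤ P x y := fun x y => probEvent_nonneg p hp.1 _
  set Py : β → ℝ := fun y => ∑ x, P x y with hPydef
  have hXY : ∀ x y, probEvent p (fun ω => (X ω, Y ω) = (x, y)) = P x y := fun x y =>
    probEvent_congr p (fun ω => by simp [Prod.ext_iff])
  have hY : ∀ y, probEvent p (fun ω => Y ω = y) = Py y := by
    intro y
    rw [probEvent_marg p _ X]
    exact Finset.sum_congr rfl fun x _ => probEvent_congr p (fun ω => by tauto)
  have eXY : entH b p (fun ω => (X ω, Y ω)) = -∑ x, ∑ y, P x y * Real.logb b (P x y) := by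
    unfold entH
    rw [Fintype.sum_prod_type]
    congr 1
    apply Finset.sum_congr rfl; intro x _
    apply Finset.sum_congr rfl; intro y _
    rw [hXY]
  have eY : entH b p Y = -∑ x, ∑ y, P x y * Real.logb b (Py y) := by
    unfold entH
    have h1 : ∀ y, probEvent p (fun ω => Y ω = y) *
        Real.logb b (probEvent p (fun ω => Y ω = y)) = ∑ x, P x y * Real.logb b (Py y) := by
      intro y
      rw [hY]
      exact Finset.sum_mul _ _ _
    simp_rw [h1]
    congr 1
    exact Finset.sum_comm
  unfold condH
  rw [eXY, eY]
  have key : ∀ x y, P x y * Real.logb b (P x y) ≤ P x y * Real.logb b (Py y) := by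
    intro x y
    rcases eq_or_lt_of_le (hPnn x y) with h | h
    · rw [← h]; simp
    · apply mul_le_mul_of_nonneg_left _ (le_of_lt h)
      apply Real.logb_le_logb_of_le hb h
      exact Finset.single_le_sum (fun x' _ => hPnn x' y) (Finset.mem_univ x)
  have hle : ∑ x, ∑ y, P x y * Real.logb b (P x y)
      ≤ ∑ x, ∑ y, P x y * Real.logb b (Py y) :=
    Finset.sum_le_sum fun x _ => Finset.sum_le_sum fun y _ => key x y
  linarith

lemma mutI_nonneg (b : ℝ) (hb : 1 < b) (p : Ω → ℝ) (hp : IsPMF p)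
    (X : Ω → α) (Y : Ω → β) : 0 ≤ mutI b p X Y := by
  classical
  have h := condMI_nonneg b hb p hp X Y (fun _ => (0 : Fin 1))
  unfold condMI condH at h
  beta_reduce at h
  have e1 : entH b p (fun ω => (X ω, (0 : Fin 1))) = entH b p X :=
    entH_comp p b X (fun a => (a, (0 : Fin 1))) (fun a a' hh => by exact congrArg Prod.fst hh)
  have e2 : entH b p (fun ω => (Y ω, (0 : Fin 1))) = entH b p Y :=
    entH_comp p b Y (fun a => (a, (0 : Fin 1))) (fun a a' hh => by exact congrArg Prod.fst hh)
  have e3 : entH b p (fun ω => (X ω, (Y ω, (0 : Fin 1)))) = entH b p (fun ω => (X ω, Y ω)) :=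
    entH_comp p b (fun ω => (X ω, Y ω)) (fun q : α × β => (q.1, (q.2, (0 : Fin 1))))
      (fun q q' hh => by
        simp only [Prod.mk.injEq] at hh
        simp only [Prod.ext_iff]
        tauto)
  have e4 : entH b p (fun _ : Ω => (0 : Fin 1)) = 0 := by
    unfold entH
    rw [Fin.sum_univ_one]
    have h0 : probEvent p (fun _ : Ω => (0 : Fin 1) = 0) = 1 := by
      unfold probEvent
      simp [hp.2]
    rw [h0]
    simp
  rw [e1, e2, e3, e4] at h
  unfold mutI
  linarith

end More

/-- Lemma 2: if `I(Δ; Q) = 0`, `H(S' | S, Q) = 0`, and `I(Δ, Q; S) = 0`, then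
`I(Δ; S' | S) = 0`: securely coded updates preserve the conditional independence
of the increment from the updated storage. -/
theorem secure_update_preserves_cond_independence
    {Ω α β γ δ : Type} [Fintype Ω] [Fintype α] [Fintype β] [Fintype γ] [Fintype δ]
    (b : ℝ) (hb : 1 < b) (p : Ω → ℝ) (hp : IsPMF p)
    (Δ : Ω → α) (Q : Ω → β) (S : Ω → γ) (S' : Ω → δ)
    (hsec : mutI b p Δ Q = 0)
    (htrans : condH b p S' (fun ω => (S ω, Q ω)) = 0)
    (hind : mutI b p (fun ω => (Δ ω, Q ω)) S = 0) :
    condMI b p Δ S' S = 0 := by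
  classical
  have c1 := condMI_nonneg b hb p hp Δ S' S
  have c2 := condMI_nonneg b hb p hp Δ Q (fun ω => (S' ω, S ω))
  have c3 := condMI_nonneg b hb p hp S' Δ (fun ω => (S ω, Q ω))
  have c4 : 0 ≤ condH b p S' (fun ω => (Δ ω, (S ω, Q ω))) := condH_nonneg b hb p hp _ _
  have m1 := mutI_nonneg b hb p hp Δ S
  have m2 := mutI_nonneg b hb p hp Q S
  -- recoding equalities
  have rA : entH b p (fun ω => (Q ω, (S' ω, S ω)))
      = entH b p (fun ω => (S' ω, (S ω, Q ω))) :=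
    entH_comp p b (fun ω => (S' ω, (S ω, Q ω)))
      (fun t : δ × γ × β => (t.2.2, (t.1, t.2.1)))
      (fun t t' hh => by
        simp only [Prod.mk.injEq] at hh
        simp only [Prod.ext_iff]
        tauto)
  have rB : entH b p (fun ω => (Δ ω, (Q ω, (S' ω, S ω))))
      = entH b p (fun ω => (S' ω, (Δ ω, (S ω, Q ω)))) :=
    entH_comp p b (fun ω => (S' ω, (Δ ω, (S ω, Q ω))))
      (fun t : δ × α × γ × β => (t.2.1, (t.2.2.2, (t.1, t.2.2.1))))
      (fun t t' hh => by
        simp only [Prod.mk.injEq] at hh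
        simp only [Prod.ext_iff]
        tauto)
  have rC : entH b p (fun ω => (Δ ω, (S ω, Q ω)))
      = entH b p (fun ω => ((Δ ω, Q ω), S ω)) :=
    entH_comp p b (fun ω => ((Δ ω, Q ω), S ω))
      (fun t : (α × β) × γ => (t.1.1, (t.2, t.1.2)))
      (fun t t' hh => by
        simp only [Prod.mk.injEq] at hh
        simp only [Prod.ext_iff]
        tauto)
  have rD : entH b p (fun ω => (S ω, Q ω)) = entH b p (fun ω => (Q ω, S ω)) :=
    entH_comp p b (fun ω => (Q ω, S ω)) (fun t : β × γ => (t.2, t.1))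
      (fun t t' hh => by
        simp only [Prod.mk.injEq] at hh
        simp only [Prod.ext_iff]
        tauto)
  unfold condMI condH at c1 c2 c3 ⊢
  unfold condH at c4 htrans
  unfold mutI at hsec hind m1 m2
  beta_reduce at c1 c2 c3 c4 hsec htrans hind ⊢
  linarith [rA, rB, rC, rD]
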